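/- Let 0 ≤ ε ≤ 1 and 0 ≤ δ ≤ 1/2, and let A, B be real-valued random variables such that for every measurable set S, e^{-ε}·P(A ∈ S) − δ ≤ P(B ∈ S) ≤ e^{ε}·P(A ∈ S) + δ. Then |E[A − B]| ≤ 2ε·E[|A|] + 2√(δ·E[A² + B²]). -/

import Mathlib

open MeasureTheory ProbabilityTheory Real Set


lemma aux_exp_le (ε : ℝ) (hε0 : 0 ≤ ε) (hε1 : ε ≤ 1) : Real.exp ε ≤ 1 + 2*ε := by
  have h := Real.exp_bound (x := ε) (by rw [abs_of_nonneg hε0]; exact hε1) (n := 3) (by norm_num)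
  rw [abs_of_nonneg hε0] at h
  have e : ∑ i ∈ Finset.range 3, ε ^ i / (Nat.factorial i : ℝ) = 1 + ε + ε^2/2 := by
    simp [Finset.sum_range_succ, Nat.factorial]
  rw [e] at h
  have h2 := (abs_le.1 h).2
  norm_num [Nat.factorial] at h2
  nlinarith [pow_nonneg hε0 2, pow_nonneg hε0 3, sq_nonneg ε]

lemma aux_clamp (T x : ℝ) (hT : 0 < T) : |x - max (-T) (min x T)| ≤ x^2/(4*T) := by
  rcases le_total x (-T) with h | h
  · rw [min_eq_left (by linarith), max_eq_left h]
    rw [abs_of_nonpos (by linarith), le_div_iff₀ (by linarith)]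
    nlinarith [sq_nonneg (x + 2*T)]
  · rcases le_total x T with h2 | h2
    · rw [min_eq_left h2, max_eq_right h]
      simp only [sub_self, abs_zero]
      positivity
    · rw [min_eq_right h2, max_eq_right (by linarith)]
      rw [abs_of_nonneg (by linarith), le_div_iff₀ (by linarith)]
      nlinarith [sq_nonneg (x - 2*T)]

lemma aux_levelset (T s : ℝ) (h1 : -T < s) (h2 : s ≤ T) (x : ℝ) :
    s ≤ max (-T) (min x T) ↔ s ≤ x := by
  rw [le_max_iff, le_min_iff]
  constructor
  · rintro (h | ⟨h, _⟩)
    · linarith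
    · exact h
  · intro h
    exact Or.inr ⟨h, h2⟩

lemma aux_gint {Ω : Type*} [MeasurableSpace Ω] (P : Measure Ω) [IsProbabilityMeasure P]
    (T : ℝ) (hT : 0 < T) (X : Ω → ℝ) (hX : AEStronglyMeasurable X P) :
    Integrable (fun ω => max (-T) (min (X ω) T)) P := by
  have hc : Continuous (fun x : ℝ => max (-T) (min x T)) :=
    continuous_const.max (continuous_id.min continuous_const)
  refine Integrable.mono' (integrable_const T) (hc.comp_aestronglyMeasurable hX) ?_
  refine Filter.Eventually.of_forall (fun ω => ?_)
  rw [Real.norm_eq_abs, abs_le]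
  constructor
  · exact le_max_left _ _
  · exact max_le (by linarith) (min_le_right _ _)

lemma aux_tail {Ω : Type*} [MeasurableSpace Ω] (P : Measure Ω) [IsProbabilityMeasure P]
    (T : ℝ) (hT : 0 < T) (X : Ω → ℝ) (hX : MemLp X 2 P) :
    |∫ ω, X ω ∂P - ∫ ω, max (-T) (min (X ω) T) ∂P| ≤ (∫ ω, (X ω)^2 ∂P) / (4*T) := by
  have hXi : Integrable X P := hX.integrable (by norm_num)
  have hgi := aux_gint P T hT X hX.aestronglyMeasurable
  rw [← integral_sub hXi hgi]
  calc |∫ ω, (X ω - max (-T) (min (X ω) T)) ∂P|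
      ≤ ∫ ω, |X ω - max (-T) (min (X ω) T)| ∂P := by
        rw [← Real.norm_eq_abs]
        refine (norm_integral_le_integral_norm _).trans ?_
        simp [Real.norm_eq_abs]
    _ ≤ ∫ ω, (X ω)^2/(4*T) ∂P := by
        refine integral_mono ((hXi.sub hgi).abs) (hX.integrable_sq.div_const _) ?_
        exact fun ω => aux_clamp T (X ω) hT
    _ = (∫ ω, (X ω)^2 ∂P) / (4*T) := integral_div _ _

lemma aux_layer {Ω : Type*} [MeasurableSpace Ω] (P : Measure Ω) [IsProbabilityMeasure P]
    (T : ℝ) (hT : 0 < T) (X : Ω → ℝ) (hX : AEStronglyMeasurable X P) :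
    ∫ ω, max (-T) (min (X ω) T) ∂P
      = (∫ t in Ioc 0 (2*T), (P (X ⁻¹' Ici (t - T))).toReal) - T := by
  have hgi := aux_gint P T hT X hX
  have hfi : Integrable (fun ω => max (-T) (min (X ω) T) + T) P := hgi.add (integrable_const T)
  have hfnn : 0 ≤ᵐ[P] (fun ω => max (-T) (min (X ω) T) + T) :=
    Filter.Eventually.of_forall (fun ω => by
      have := le_max_left (-T) (min (X ω) T); simp only [Pi.zero_apply]; linarith)
  have hfbdd : (fun ω => max (-T) (min (X ω) T) + T) ≤ᵐ[P] (fun _ => 2*T) :=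
    Filter.Eventually.of_forall (fun ω => by
      have h : max (-T) (min (X ω) T) ≤ T := max_le (by linarith) (min_le_right _ _)
      show max (-T) (min (X ω) T) + T ≤ 2*T
      linarith)
  have key := hfi.integral_eq_integral_Ioc_meas_le hfnn hfbdd
  have e1 : ∫ ω, (max (-T) (min (X ω) T) + T) ∂P = (∫ ω, max (-T) (min (X ω) T) ∂P) + T := by
    rw [integral_add hgi (integrable_const T), integral_const]
    simp
  have e2 : ∀ t ∈ Ioc 0 (2*T),
      (P {a | t ≤ max (-T) (min (X a) T) + T}).toReal = (P (X ⁻¹' Ici (t - T))).toReal := by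
    intro t ht
    congr 1
    apply congrArg
    ext a
    simp only [Set.mem_setOf_eq, Set.mem_preimage, Set.mem_Ici]
    rw [← sub_le_iff_le_add]
    exact aux_levelset T (t - T) (by simpa using ht.1) (by linarith [ht.2]) (X a)
  rw [e1] at key
  simp only [measureReal_def] at key
  rw [setIntegral_congr_fun measurableSet_Ioc e2] at key
  linarith


lemma aux_twoside {Ω : Type*} [MeasurableSpace Ω] (P : Measure Ω) [IsProbabilityMeasure P]
    (ε δ : ℝ) (hε0 : 0 ≤ ε) (hε1 : ε ≤ 1)
    (A B : Ω → ℝ)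
    (hind : ∀ S : Set ℝ, MeasurableSet S →
      Real.exp (-ε) * (P (A ⁻¹' S)).toReal - δ ≤ (P (B ⁻¹' S)).toReal ∧
      (P (B ⁻¹' S)).toReal ≤ Real.exp ε * (P (A ⁻¹' S)).toReal + δ)
    (S : Set ℝ) (hS : MeasurableSet S) :
    |(P (A ⁻¹' S)).toReal - (P (B ⁻¹' S)).toReal| ≤ 2*ε*(P (A ⁻¹' S)).toReal + δ := by
  obtain ⟨h1, h2⟩ := hind S hS
  have hpA : 0 ≤ (P (A ⁻¹' S)).toReal := ENNReal.toReal_nonneg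
  have e1 : Real.exp ε ≤ 1 + 2*ε := aux_exp_le ε hε0 hε1
  have e2 : 1 - ε ≤ Real.exp (-ε) := by
    have := Real.add_one_le_exp (-ε); linarith
  rw [abs_sub_le_iff]
  constructor
  · nlinarith
  · nlinarith


lemma aux_mainT {Ω : Type*} [MeasurableSpace Ω] (P : Measure Ω) [IsProbabilityMeasure P]
    (ε δ : ℝ) (hε0 : 0 ≤ ε) (hε1 : ε ≤ 1) (hδ0 : 0 ≤ δ)
    (A B : Ω → ℝ) (hA : MemLp A 2 P) (hB : MemLp B 2 P)
    (hind : ∀ S : Set ℝ, MeasurableSet S →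
      Real.exp (-ε) * (P (A ⁻¹' S)).toReal - δ ≤ (P (B ⁻¹' S)).toReal ∧
      (P (B ⁻¹' S)).toReal ≤ Real.exp ε * (P (A ⁻¹' S)).toReal + δ)
    (T : ℝ) (hT : 0 < T) :
    |∫ ω, (A ω - B ω) ∂P|
      ≤ 2*ε*(∫ ω, |A ω| ∂P) + 2*δ*T
        + ((∫ ω, (A ω)^2 ∂P) + (∫ ω, (B ω)^2 ∂P))/(4*T) := by
  have hAi : Integrable A P := hA.integrable (by norm_num)
  have hBi : Integrable B P := hB.integrable (by norm_num)
  -- helper : probabilities (as reals) are ≤ 1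
  have hle1 : ∀ (s : Set Ω), (P s).toReal ≤ 1 := fun s => by
    simpa using ENNReal.toReal_mono (by norm_num) (prob_le_one (μ := P) (s := s))
  set GA := ∫ ω, max (-T) (min (A ω) T) ∂P with hGA
  set GB := ∫ ω, max (-T) (min (B ω) T) ∂P with hGB
  -- the tail probability functions
  set FA : ℝ → ℝ := fun t => (P (A ⁻¹' Ici (t - T))).toReal with hFA
  set FB : ℝ → ℝ := fun t => (P (B ⁻¹' Ici (t - T))).toReal with hFB
  set QA : ℝ → ℝ := fun t => (P (A ⁻¹' Iio (t - T))).toReal with hQA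
  set ψ : ℝ → ℝ := fun t => if t ≤ T then QA t else FA t with hψ
  -- monotonicity and integrability
  have hFA_anti : Antitone FA := fun s t hst =>
    ENNReal.toReal_mono (measure_ne_top _ _)
      (measure_mono (preimage_mono (Ici_subset_Ici.2 (by linarith))))
  have hFB_anti : Antitone FB := fun s t hst =>
    ENNReal.toReal_mono (measure_ne_top _ _)
      (measure_mono (preimage_mono (Ici_subset_Ici.2 (by linarith))))
  have hQA_mono : Monotone QA := fun s t hst =>
    ENNReal.toReal_mono (measure_ne_top _ _)
      (measure_mono (preimage_mono (Iio_subset_Iio (by linarith))))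
  have hψ_meas : Measurable ψ :=
    Measurable.ite measurableSet_Iic hQA_mono.measurable hFA_anti.measurable
  have int_of_bdd : ∀ (f : ℝ → ℝ) (s : Set ℝ), MeasurableSet s → volume s < ⊤ → Measurable f →
      (∀ t, |f t| ≤ 1) → IntegrableOn f s volume := by
    intro f s hs hvol hf hbd
    refine Integrable.mono' (integrableOn_const (C := (1:ℝ)) hvol.ne) hf.aestronglyMeasurable.restrict ?_
    exact Filter.Eventually.of_forall fun t => by simpa [Real.norm_eq_abs] using hbd t
  have intFA : IntegrableOn FA (Ioc 0 (2*T)) volume :=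
    int_of_bdd FA _ measurableSet_Ioc measure_Ioc_lt_top hFA_anti.measurable
      (fun t => by rw [abs_of_nonneg ENNReal.toReal_nonneg]; exact hle1 _)
  have intFB : IntegrableOn FB (Ioc 0 (2*T)) volume :=
    int_of_bdd FB _ measurableSet_Ioc measure_Ioc_lt_top hFB_anti.measurable
      (fun t => by rw [abs_of_nonneg ENNReal.toReal_nonneg]; exact hle1 _)
  have intψ : IntegrableOn ψ (Ioc 0 (2*T)) volume :=
    int_of_bdd ψ _ measurableSet_Ioc measure_Ioc_lt_top hψ_meas
      (fun t => by
        rw [hψ]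
        rcases le_or_gt t T with h | h
        · simp only [if_pos h]
          rw [abs_of_nonneg ENNReal.toReal_nonneg]; exact hle1 _
        · simp only [if_neg (not_le.2 h)]
          rw [abs_of_nonneg ENNReal.toReal_nonneg]; exact hle1 _)
  -- main middle bound
  -- complement identity
  have hco : ∀ (X : Ω → ℝ), AEMeasurable X P → ∀ s : ℝ,
      (P (X ⁻¹' Iio s)).toReal = 1 - (P (X ⁻¹' Ici s)).toReal := by
    intro X hX s
    have h1 : X ⁻¹' Iio s = (X ⁻¹' Ici s)ᶜ := by rw [← preimage_compl, compl_Ici]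
    rw [h1, measure_compl₀ (hX.nullMeasurable measurableSet_Ici) (measure_ne_top _ _),
      measure_univ, ENNReal.toReal_sub_of_le prob_le_one (by norm_num)]
    simp
  -- pointwise bound on the level sets
  have hpt : ∀ t ∈ Ioc 0 (2*T), |FA t - FB t| ≤ 2*ε*ψ t + δ := by
    intro t ht
    rcases le_or_gt t T with h | h
    · have e1 := hco A hA.aestronglyMeasurable.aemeasurable (t-T)
      have e2 := hco B hB.aestronglyMeasurable.aemeasurable (t-T)
      have h3 := abs_sub_le_iff.1
        (aux_twoside P ε δ hε0 hε1 A B hind (Iio (t-T)) measurableSet_Iio)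
      simp only [hψ, hFA, hFB, hQA, if_pos h] at *
      rw [abs_sub_le_iff]
      constructor
      · linarith [h3.2]
      · linarith [h3.1]
    · have h3 := aux_twoside P ε δ hε0 hε1 A B hind (Ici (t-T)) measurableSet_Ici
      simp only [hψ, hFA, hFB, if_neg (not_le.2 h)]
      exact h3
  have hmid : |GA - GB| ≤ 2*ε*(∫ ω, |A ω| ∂P) + 2*δ*T := by
    have step1 : GA - GB = ∫ t in Ioc 0 (2*T), (FA t - FB t) := by
      rw [hGA, hGB, aux_layer P T hT A hA.aestronglyMeasurable,
        aux_layer P T hT B hB.aestronglyMeasurable, integral_sub intFA intFB]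
      ring
    have intconst : IntegrableOn (fun _ : ℝ => δ) (Ioc 0 (2*T)) volume :=
      integrableOn_const (C := δ) measure_Ioc_lt_top.ne
    have intrhs : IntegrableOn (fun t => 2*ε*ψ t + δ) (Ioc 0 (2*T)) volume :=
      (intψ.const_mul _).add intconst
    have step2 : |∫ t in Ioc 0 (2*T), (FA t - FB t)|
        ≤ ∫ t in Ioc 0 (2*T), (2*ε*ψ t + δ) := by
      rw [← Real.norm_eq_abs]
      refine (norm_integral_le_integral_norm _).trans ?_
      refine setIntegral_mono_on ((intFA.sub intFB).norm) intrhs measurableSet_Ioc ?_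
      intro t ht
      rw [Real.norm_eq_abs]
      exact hpt t ht
    have step3 : ∫ t in Ioc 0 (2*T), (2*ε*ψ t + δ)
        = 2*ε*(∫ t in Ioc 0 (2*T), ψ t) + δ*(2*T) := by
      rw [integral_add (intψ.const_mul _) intconst, integral_const_mul, setIntegral_const,
        measureReal_def, Real.volume_Ioc]
      rw [smul_eq_mul, sub_zero, ENNReal.toReal_ofReal (by linarith)]
      ring
    -- bound the ψ integral by E|A|
    have int1 : IntegrableOn ψ (Ioc 0 T) volume :=
      intψ.mono_set (Ioc_subset_Ioc_right (by linarith))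
    have int2 : IntegrableOn ψ (Ioc T (2*T)) volume :=
      intψ.mono_set (Ioc_subset_Ioc_left hT.le)
    have hsplitint : ∫ t in Ioc 0 (2*T), ψ t
        = (∫ t in Ioc 0 T, ψ t) + ∫ t in Ioc T (2*T), ψ t := by
      rw [← setIntegral_union (Ioc_disjoint_Ioc_of_le le_rfl) measurableSet_Ioc int1 int2,
        Ioc_union_Ioc_eq_Ioc hT.le (by linarith)]
    have e1 : ∫ t in Ioc 0 T, ψ t = ∫ t in Ioc 0 T, QA t :=
      setIntegral_congr_fun measurableSet_Ioc (fun t ht => by simp only [hψ, if_pos ht.2])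
    have e2 : ∫ t in Ioc T (2*T), ψ t = ∫ t in Ioc T (2*T), FA t :=
      setIntegral_congr_fun measurableSet_Ioc
        (fun t ht => by simp only [hψ, if_neg (not_le.2 ht.1)])
    have c1 : ∫ t in Ioc 0 T, QA t = ∫ v in Ioc 0 T, (P (A ⁻¹' Iio (-v))).toReal := by
      simp only [hQA]
      rw [← intervalIntegral.integral_of_le hT.le, ← intervalIntegral.integral_of_le hT.le]
      have h1 := intervalIntegral.integral_comp_sub_right (a := 0) (b := T)
        (fun u => (P (A ⁻¹' Iio u)).toReal) T
      have h2 := intervalIntegral.integral_comp_neg (a := 0) (b := T)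
        (fun u => (P (A ⁻¹' Iio u)).toReal)
      simp only [zero_sub, sub_self, neg_zero] at h1 h2
      exact h1.trans h2.symm
    have c2 : ∫ t in Ioc T (2*T), FA t = ∫ v in Ioc 0 T, (P (A ⁻¹' Ici v)).toReal := by
      simp only [hFA]
      rw [← intervalIntegral.integral_of_le (by linarith : T ≤ 2*T),
        ← intervalIntegral.integral_of_le hT.le]
      have h1 := intervalIntegral.integral_comp_sub_right (a := T) (b := 2*T)
        (fun u => (P (A ⁻¹' Ici u)).toReal) T
      have h2 : 2*T - T = T := by ring
      rw [sub_self, h2] at h1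
      exact h1
    have hanti1 : Antitone (fun v : ℝ => (P (A ⁻¹' Iio (-v))).toReal) := fun s t hst =>
      ENNReal.toReal_mono (measure_ne_top _ _)
        (measure_mono (preimage_mono (Iio_subset_Iio (by linarith))))
    have hanti2 : Antitone (fun v : ℝ => (P (A ⁻¹' Ici v)).toReal) := fun s t hst =>
      ENNReal.toReal_mono (measure_ne_top _ _)
        (measure_mono (preimage_mono (Ici_subset_Ici.2 (by linarith))))
    have intc1 : IntegrableOn (fun v : ℝ => (P (A ⁻¹' Iio (-v))).toReal) (Ioc 0 T) volume :=
      int_of_bdd _ _ measurableSet_Ioc measure_Ioc_lt_top hanti1.measurable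
        (fun t => by rw [abs_of_nonneg ENNReal.toReal_nonneg]; exact hle1 _)
    have intc2 : IntegrableOn (fun v : ℝ => (P (A ⁻¹' Ici v)).toReal) (Ioc 0 T) volume :=
      int_of_bdd _ _ measurableSet_Ioc measure_Ioc_lt_top hanti2.measurable
        (fun t => by rw [abs_of_nonneg ENNReal.toReal_nonneg]; exact hle1 _)
    have csum : (∫ v in Ioc 0 T, (P (A ⁻¹' Iio (-v))).toReal)
          + ∫ v in Ioc 0 T, (P (A ⁻¹' Ici v)).toReal
        = ∫ v in Ioc 0 T, ((P (A ⁻¹' Iio (-v))).toReal + (P (A ⁻¹' Ici v)).toReal) :=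
      (integral_add intc1 intc2).symm
    -- the tail probability function of |A|
    set ρ : ℝ → ℝ := fun v => (P {ω | v ≤ |A ω|}).toReal with hρ
    have hρ_anti : Antitone ρ := fun s t hst =>
      ENNReal.toReal_mono (measure_ne_top _ _)
        (measure_mono (fun ω hω => le_trans hst hω))
    have hptv : ∀ v ∈ Ioc 0 T,
        (P (A ⁻¹' Iio (-v))).toReal + (P (A ⁻¹' Ici v)).toReal ≤ ρ v := by
      intro v hv
      have hd : Disjoint (A ⁻¹' Iio (-v)) (A ⁻¹' Ici v) :=
        (Iio_disjoint_Ici (by linarith [hv.1])).preimage A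
      have hnm : NullMeasurableSet (A ⁻¹' Ici v) P :=
        hA.aestronglyMeasurable.aemeasurable.nullMeasurable measurableSet_Ici
      rw [hρ, ← ENNReal.toReal_add (measure_ne_top _ _) (measure_ne_top _ _),
        ← measure_union₀ hnm hd.aedisjoint]
      refine ENNReal.toReal_mono (measure_ne_top _ _) (measure_mono ?_)
      rintro ω (hω | hω)
      · simp only [mem_preimage, mem_Iio] at hω
        simp only [mem_setOf_eq, le_abs]
        right
        linarith
      · simp only [mem_preimage, mem_Ici] at hω
        simp only [mem_setOf_eq, le_abs]
        left
        exact hω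
    have intρT : IntegrableOn ρ (Ioc 0 T) volume :=
      int_of_bdd _ _ measurableSet_Ioc measure_Ioc_lt_top hρ_anti.measurable
        (fun t => by rw [abs_of_nonneg ENNReal.toReal_nonneg]; exact hle1 _)
    -- ρ is integrable on (0, ∞)
    have hAabs_nn : 0 ≤ᵐ[P] fun ω => |A ω| := Filter.Eventually.of_forall (fun ω => abs_nonneg _)
    have intρIoi : IntegrableOn ρ (Ioi 0) volume := by
      refine ⟨hρ_anti.measurable.aestronglyMeasurable.restrict, ?_⟩
      have key := lintegral_eq_lintegral_meas_le P hAabs_nn hAi.abs.aestronglyMeasurable.aemeasurable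
      have hfin : (∫⁻ t in Ioi 0, P {a | t ≤ |A a|}) < ⊤ := by
        rw [← key]
        exact hAi.abs.lintegral_lt_top
      have heq : ∀ t ∈ Ioi (0:ℝ), (‖ρ t‖₊ : ENNReal) = P {a | t ≤ |A a|} := by
        intro t _
        rw [← enorm_eq_nnnorm, ← ofReal_norm, Real.norm_eq_abs, hρ,
          abs_of_nonneg ENNReal.toReal_nonneg, ENNReal.ofReal_toReal (measure_ne_top _ _)]
      show (∫⁻ t in Ioi 0, (‖ρ t‖₊ : ENNReal)) < ⊤
      rw [setLIntegral_congr_fun measurableSet_Ioi heq]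
      exact hfin
    have hlayerabs : ∫ ω, |A ω| ∂P = ∫ t in Ioi 0, ρ t :=
      hAi.abs.integral_eq_integral_meas_le hAabs_nn
    have step4 : ∫ t in Ioc 0 (2*T), ψ t ≤ ∫ ω, |A ω| ∂P := by
      rw [hsplitint, e1, e2, c1, c2, csum, hlayerabs]
      calc ∫ v in Ioc 0 T, ((P (A ⁻¹' Iio (-v))).toReal + (P (A ⁻¹' Ici v)).toReal)
          ≤ ∫ v in Ioc 0 T, ρ v :=
            setIntegral_mono_on (intc1.add intc2) intρT measurableSet_Ioc hptv
        _ ≤ ∫ t in Ioi 0, ρ t := by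
            refine setIntegral_mono_set intρIoi ?_ Ioc_subset_Ioi_self.eventuallyLE
            exact Filter.Eventually.of_forall (fun t => ENNReal.toReal_nonneg)
    calc |GA - GB| = |∫ t in Ioc 0 (2*T), (FA t - FB t)| := by rw [step1]
      _ ≤ ∫ t in Ioc 0 (2*T), (2*ε*ψ t + δ) := step2
      _ = 2*ε*(∫ t in Ioc 0 (2*T), ψ t) + δ*(2*T) := step3
      _ ≤ 2*ε*(∫ ω, |A ω| ∂P) + 2*δ*T := by
          have := mul_le_mul_of_nonneg_left step4 (by linarith : (0:ℝ) ≤ 2*ε)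
          linarith
  -- tail bounds
  have htailA := aux_tail P T hT A hA
  have htailB := aux_tail P T hT B hB
  have hsplit : ∫ ω, (A ω - B ω) ∂P
      = (∫ ω, A ω ∂P - GA) + (GA - GB) + (GB - ∫ ω, B ω ∂P) := by
    rw [integral_sub hAi hBi]; ring
  rw [hsplit]
  calc |(∫ ω, A ω ∂P - GA) + (GA - GB) + (GB - ∫ ω, B ω ∂P)|
      ≤ |(∫ ω, A ω ∂P - GA) + (GA - GB)| + |GB - ∫ ω, B ω ∂P| := abs_add_le _ _
    _ ≤ |∫ ω, A ω ∂P - GA| + |GA - GB| + |GB - ∫ ω, B ω ∂P| :=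
        add_le_add_left (abs_add_le _ _) _
    _ ≤ (∫ ω, (A ω)^2 ∂P)/(4*T) + (2*ε*(∫ ω, |A ω| ∂P) + 2*δ*T)
          + (∫ ω, (B ω)^2 ∂P)/(4*T) := by
        refine add_le_add (add_le_add htailA hmid) ?_
        rw [abs_sub_comm]; exact htailB
    _ = 2*ε*(∫ ω, |A ω| ∂P) + 2*δ*T
          + ((∫ ω, (A ω)^2 ∂P) + (∫ ω, (B ω)^2 ∂P))/(4*T) := by ring


/-- indistinguishability implies closeness of expectations:
if `0 ≤ ε ≤ 1`, `0 ≤ δ ≤ 1/2`, and the real random variables `A, B` (with finite second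
moments) satisfy, for every measurable `S ⊆ ℝ`,
`e^{-ε} P(A ∈ S) − δ ≤ P(B ∈ S) ≤ e^{ε} P(A ∈ S) + δ`, then
`|E[A − B]| ≤ 2 ε E[|A|] + 2 √(δ E[A² + B²])`. -/
theorem dp_indistinguishable_expectation_bound
    {Ω : Type*} [MeasurableSpace Ω] (P : Measure Ω) [IsProbabilityMeasure P]
    (ε δ : ℝ) (hε0 : 0 ≤ ε) (hε1 : ε ≤ 1) (hδ0 : 0 ≤ δ) (hδ1 : δ ≤ 1 / 2)
    (A B : Ω → ℝ) (hA : MemLp A 2 P) (hB : MemLp B 2 P)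
    (hind : ∀ S : Set ℝ, MeasurableSet S →
      Real.exp (-ε) * (P (A ⁻¹' S)).toReal - δ ≤ (P (B ⁻¹' S)).toReal ∧
      (P (B ⁻¹' S)).toReal ≤ Real.exp ε * (P (A ⁻¹' S)).toReal + δ) :
    |∫ ω, (A ω - B ω) ∂P|
      ≤ 2 * ε * ∫ ω, |A ω| ∂P
        + 2 * Real.sqrt (δ * ∫ ω, (A ω ^ 2 + B ω ^ 2) ∂P) := by
  have hintA2 : Integrable (fun ω => (A ω)^2) P := hA.integrable_sq
  have hintB2 : Integrable (fun ω => (B ω)^2) P := hB.integrable_sq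
  have hE_eq : ∫ ω, (A ω ^ 2 + B ω ^ 2) ∂P
      = (∫ ω, (A ω)^2 ∂P) + (∫ ω, (B ω)^2 ∂P) := integral_add hintA2 hintB2
  set E : ℝ := (∫ ω, (A ω)^2 ∂P) + (∫ ω, (B ω)^2 ∂P) with hEdef
  have hA2nn : 0 ≤ ∫ ω, (A ω)^2 ∂P := integral_nonneg (fun ω => sq_nonneg _)
  have hB2nn : 0 ≤ ∫ ω, (B ω)^2 ∂P := integral_nonneg (fun ω => sq_nonneg _)
  have hEnn : 0 ≤ E := by positivity
  have hEAnn : 0 ≤ ∫ ω, |A ω| ∂P := integral_nonneg (fun ω => abs_nonneg _)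
  rcases hEnn.lt_or_eq with hEpos | hEzero
  · -- E > 0
    rcases hδ0.lt_or_eq with hδpos | hδzero
    · -- δ > 0
      set s : ℝ := Real.sqrt (E/δ) with hsdef
      have hspos : 0 < s := Real.sqrt_pos.2 (by positivity)
      have hs2 : s^2 = E/δ := Real.sq_sqrt (by positivity)
      have hsE : δ * s^2 = E := by
        rw [hs2]; field_simp
      set r : ℝ := Real.sqrt (δ * E) with hrdef
      have hrnn : 0 ≤ r := Real.sqrt_nonneg _
      have hr2 : r^2 = δ * E := Real.sq_sqrt (by positivity)
      have hds : δ * s = r := by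
        have h1 : δ * E = δ^2 * (E/δ) := by field_simp
        rw [hrdef, h1, Real.sqrt_mul (sq_nonneg δ), Real.sqrt_sq hδ0, ← hsdef]
      have key := aux_mainT P ε δ hε0 hε1 hδ0 A B hA hB hind (s/2) (by positivity)
      rw [← hEdef] at key
      refine key.trans ?_
      have hE4T : E/(4*(s/2)) = r/2 := by
        rw [← hds, ← hsE]
        field_simp
        ring
      rw [hE4T]
      have : 2*δ*(s/2) = r := by rw [← hds]; ring
      rw [this, hE_eq, ← hrdef]
      linarith
    · -- δ = 0
      rw [← hδzero]
      simp only [zero_mul, Real.sqrt_zero, mul_zero, add_zero]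
      refine le_of_forall_gt_imp_ge_of_dense fun y hy => ?_
      set η : ℝ := y - 2 * ε * ∫ ω, |A ω| ∂P with hηdef
      have hηpos : 0 < η := by rw [hηdef]; linarith
      have hTpos : 0 < E/(4*η) := by positivity
      have key := aux_mainT P ε δ hε0 hε1 hδ0 A B hA hB hind (E/(4*η)) hTpos
      rw [← hδzero, ← hEdef] at key
      have hsimp : E/(4*(E/(4*η))) = η := by
        field_simp
      rw [hsimp] at key
      have : y = 2 * ε * (∫ ω, |A ω| ∂P) + η := by rw [hηdef]; ring
      rw [this]
      linarith
  · -- E = 0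
    have hA2zero : ∫ ω, (A ω)^2 ∂P = 0 := by linarith
    have hB2zero : ∫ ω, (B ω)^2 ∂P = 0 := by linarith
    have hAae : (fun ω => (A ω)^2) =ᵐ[P] 0 :=
      (integral_eq_zero_iff_of_nonneg (fun ω => sq_nonneg _) hintA2).1 hA2zero
    have hBae : (fun ω => (B ω)^2) =ᵐ[P] 0 :=
      (integral_eq_zero_iff_of_nonneg (fun ω => sq_nonneg _) hintB2).1 hB2zero
    have hzero : ∫ ω, (A ω - B ω) ∂P = 0 := by
      rw [← integral_zero Ω ℝ (μ := P)]
      apply integral_congr_ae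
      filter_upwards [hAae, hBae] with ω h1 h2
      have hA0 : A ω = 0 := by
        have : (A ω)^2 = 0 := h1
        exact pow_eq_zero_iff (n := 2) (by norm_num) |>.1 this
      have hB0 : B ω = 0 := by
        have : (B ω)^2 = 0 := h2
        exact pow_eq_zero_iff (n := 2) (by norm_num) |>.1 this
      simp [hA0, hB0]
    rw [hzero]
    simp only [abs_zero]
    positivity
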